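/- There exists a constant C > 0 such that for every g ∈ H^1(ℝ), ∫_ℝ |g(x)|^3 dx ≤ C (sup_{y ∈ ℝ} ∫_{B(y,1/2)} (g'(x)^2 + g(x)^2) dx)^{1/2} · ‖g‖_{H^1}^2. -/

import Mathlib

open MeasureTheory Set
open scoped Interval

/-- Local Sobolev-type bound: `g x ^ 2 ≤ 2 ∫_{(x-1/2,x+1/2)} (g'^2 + g^2)`. -/
lemma aux_local_bound (g g' : ℝ → ℝ)
    (hd : ∀ x, HasDerivAt g (g' x) x) (hg : MemLp g 2 (volume : Measure ℝ))
    (hg' : MemLp g' 2 (volume : Measure ℝ)) (x : ℝ) :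
    g x ^ 2 ≤ 2 * ∫ t in Ioo (x - 1/2) (x + 1/2), (g' t ^ 2 + g t ^ 2) := by
  set a := x - 1/2 with ha
  set b := x + 1/2 with hb
  have hab : a ≤ b := by simp [ha, hb]; linarith
  have hgc : Continuous g := by
    apply continuous_iff_continuousAt.2
    exact fun t => (hd t).continuousAt
  have hInt : Integrable (fun t => g' t ^ 2 + g t ^ 2) (volume : Measure ℝ) :=
    hg'.integrable_sq.add hg.integrable_sq
  -- the product 2 g g' is integrable
  have habs : ∀ t, |2 * g t * g' t| ≤ g' t ^ 2 + g t ^ 2 := by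
    intro t
    rw [abs_mul, abs_mul, abs_two]
    nlinarith [sq_nonneg (|g t| - |g' t|), abs_nonneg (g t), abs_nonneg (g' t),
      sq_abs (g t), sq_abs (g' t)]
  have hprod : Integrable (fun t => 2 * g t * g' t) (volume : Measure ℝ) := by
    refine hInt.mono' ?_ ?_
    · exact (((aestronglyMeasurable_const).mul hgc.aestronglyMeasurable).mul hg'.1)
    · filter_upwards with t
      simp only [Real.norm_eq_abs]
      exact habs t
  -- minimum of g^2 on [a,b]
  obtain ⟨t₀, ht₀mem, ht₀⟩ := isCompact_Icc.exists_isMinOn (Set.nonempty_Icc.2 hab)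
    ((hgc.pow 2).continuousOn (s := Icc a b))
  -- g t₀ ^ 2 ≤ ∫_{Ioo a b} g^2
  have hvol : (volume (Ioo a b)).toReal = 1 := by
    simp [Real.volume_Ioo, ha, hb]
    norm_num
  have hmin : g t₀ ^ 2 ≤ ∫ t in Ioo a b, g t ^ 2 := by
    have h1 : g t₀ ^ 2 * (volume (Ioo a b)).toReal ≤ ∫ t in Ioo a b, g t ^ 2 := by
      refine setIntegral_ge_of_const_le_real (μ := volume) measurableSet_Ioo (by simp [Real.volume_Ioo]) ?_
        (hg.integrable_sq.integrableOn)
      intro t ht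
      exact ht₀ (Ioo_subset_Icc_self ht)
    rwa [hvol, mul_one] at h1
  -- FTC
  have hftc : ∫ t in t₀..x, 2 * g t * g' t = g x ^ 2 - g t₀ ^ 2 := by
    apply intervalIntegral.integral_eq_sub_of_hasDerivAt
    · intro t _
      simpa [mul_comm, mul_assoc, mul_left_comm] using ((hd t).fun_pow 2)
    · exact hprod.intervalIntegrable
  -- bound the interval integral
  have hxmem : x ∈ Icc a b := by
    constructor <;> · simp only [ha, hb]; linarith
  have hsub : Ι t₀ x ⊆ Icc a b :=
    uIoc_subset_uIcc.trans (uIcc_subset_Icc ht₀mem hxmem)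
  have hbound : |∫ t in t₀..x, 2 * g t * g' t| ≤ ∫ t in Ioo a b, (g' t ^ 2 + g t ^ 2) := by
    have h1 : |∫ t in t₀..x, 2 * g t * g' t| ≤ ∫ t in Ι t₀ x, |2 * g t * g' t| := by
      have := intervalIntegral.norm_integral_le_integral_norm_uIoc (a := t₀) (b := x)
          (f := fun t => 2 * g t * g' t) (μ := volume)
      simp only [Real.norm_eq_abs] at this
      exact this
    have h2 : ∫ t in Ι t₀ x, |2 * g t * g' t| ≤ ∫ t in Icc a b, |2 * g t * g' t| := by
      refine setIntegral_mono_set hprod.abs.integrableOn ?_ ?_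
      · filter_upwards with t using abs_nonneg _
      · exact Filter.Eventually.of_forall hsub
    have h3 : ∫ t in Icc a b, |2 * g t * g' t| ≤ ∫ t in Icc a b, (g' t ^ 2 + g t ^ 2) := by
      refine setIntegral_mono_on hprod.abs.integrableOn hInt.integrableOn
        measurableSet_Icc ?_
      intro t _
      exact habs t
    have heq : ∫ t in Icc a b, (g' t ^ 2 + g t ^ 2) = ∫ t in Ioo a b, (g' t ^ 2 + g t ^ 2) :=
      integral_Icc_eq_integral_Ioo
    linarith
  have hgsq : ∫ t in Ioo a b, g t ^ 2 ≤ ∫ t in Ioo a b, (g' t ^ 2 + g t ^ 2) := by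
    refine setIntegral_mono_on hg.integrable_sq.integrableOn hInt.integrableOn
      measurableSet_Ioo ?_
    intro t _
    nlinarith [sq_nonneg (g' t)]
  have : g x ^ 2 = g t₀ ^ 2 + ∫ t in t₀..x, 2 * g t * g' t := by linarith [hftc]
  have habsle := le_abs_self (∫ t in t₀..x, 2 * g t * g' t)
  linarith

theorem stmt_1 :
    ∃ C > 0, ∀ (g g' : ℝ → ℝ),
      (∀ x, HasDerivAt g (g' x) x) → MemLp g 2 (volume : Measure ℝ) →
      MemLp g' 2 (volume : Measure ℝ) →
      ∫ x : ℝ, |g x| ^ 3 ≤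
        C * Real.sqrt (⨆ y : ℝ, ∫ x in Ioo (y - 1/2) (y + 1/2), (g' x ^ 2 + g x ^ 2))
          * ∫ x : ℝ, (g' x ^ 2 + g x ^ 2) := by
  refine ⟨2, by norm_num, ?_⟩
  intro g g' hd hg hg'
  have hInt : Integrable (fun t => g' t ^ 2 + g t ^ 2) (volume : Measure ℝ) :=
    hg'.integrable_sq.add hg.integrable_sq
  set F : ℝ → ℝ := fun y => ∫ t in Ioo (y - 1/2) (y + 1/2), (g' t ^ 2 + g t ^ 2) with hF
  set S : ℝ := ⨆ y : ℝ, F y with hS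
  have hnn : ∀ t : ℝ, (0:ℝ) ≤ g' t ^ 2 + g t ^ 2 := fun t => by positivity
  have hbdd : BddAbove (Set.range F) := by
    refine ⟨∫ t : ℝ, (g' t ^ 2 + g t ^ 2), ?_⟩
    rintro _ ⟨y, rfl⟩
    exact setIntegral_le_integral hInt (Filter.Eventually.of_forall hnn)
  have hFS : ∀ y, F y ≤ S := fun y => le_ciSup hbdd y
  have hF0 : (0:ℝ) ≤ F 0 := integral_nonneg fun t => hnn t
  have hS0 : (0:ℝ) ≤ S := le_trans hF0 (hFS 0)
  -- pointwise: g x ^ 2 ≤ 2 S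
  have hpt : ∀ x, g x ^ 2 ≤ 2 * S := by
    intro x
    calc g x ^ 2 ≤ 2 * F x := aux_local_bound g g' hd hg hg' x
      _ ≤ 2 * S := by linarith [hFS x]
  -- hence |g x| ≤ √(2S)
  have habsle : ∀ x, |g x| ≤ Real.sqrt 2 * Real.sqrt S := by
    intro x
    have h1 : |g x| ≤ Real.sqrt (2 * S) := Real.abs_le_sqrt (hpt x)
    rwa [Real.sqrt_mul (by norm_num : (0:ℝ) ≤ 2)] at h1
  have hcube : ∀ x, |g x| ^ 3 ≤ (Real.sqrt 2 * Real.sqrt S) * g x ^ 2 := by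
    intro x
    have h1 : |g x| ^ 3 = |g x| * |g x| ^ 2 := by ring
    rw [h1, sq_abs]
    exact mul_le_mul_of_nonneg_right (habsle x) (sq_nonneg _)
  have hintcube : ∫ x : ℝ, |g x| ^ 3 ≤
      ∫ x : ℝ, (Real.sqrt 2 * Real.sqrt S) * g x ^ 2 := by
    refine integral_mono_of_nonneg (Filter.Eventually.of_forall fun x => by positivity)
      (hg.integrable_sq.const_mul _) (Filter.Eventually.of_forall hcube)
  rw [integral_const_mul] at hintcube
  have hgsq_le : ∫ x : ℝ, g x ^ 2 ≤ ∫ x : ℝ, (g' x ^ 2 + g x ^ 2) :=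
    integral_mono hg.integrable_sq hInt fun x => by nlinarith [sq_nonneg (g' x)]
  have hc0 : (0:ℝ) ≤ Real.sqrt 2 * Real.sqrt S := by positivity
  have hgsq0 : (0:ℝ) ≤ ∫ x : ℝ, g x ^ 2 := integral_nonneg fun x => sq_nonneg _
  have hint0 : (0:ℝ) ≤ ∫ x : ℝ, (g' x ^ 2 + g x ^ 2) := integral_nonneg hnn
  have hsqrt2 : Real.sqrt 2 ≤ 2 := by
    nlinarith [Real.sq_sqrt (by norm_num : (0:ℝ) ≤ 2), Real.sqrt_nonneg 2]
  calc ∫ x : ℝ, |g x| ^ 3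
      ≤ (Real.sqrt 2 * Real.sqrt S) * ∫ x : ℝ, g x ^ 2 := hintcube
    _ ≤ (Real.sqrt 2 * Real.sqrt S) * ∫ x : ℝ, (g' x ^ 2 + g x ^ 2) :=
        mul_le_mul_of_nonneg_left hgsq_le hc0
    _ ≤ (2 * Real.sqrt S) * ∫ x : ℝ, (g' x ^ 2 + g x ^ 2) := by
        refine mul_le_mul_of_nonneg_right ?_ hint0
        exact mul_le_mul_of_nonneg_right hsqrt2 (Real.sqrt_nonneg _)
    _ = 2 * Real.sqrt S * ∫ x : ℝ, (g' x ^ 2 + g x ^ 2) := by ring
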